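/- With the notation of the previous setup ($0 = r_1 < r_2 < \cdots$, $\mathcal{W}_m$, $X_p$, $\Psi$), the homomorphism $\Psi$ preserves essential norms up to constants: $\frac{1}{2m+1}\|T\|_e \le \|\Psi(T)\|_e \le (2m+1)\|T\|_e$ for all $T \in \mathcal{W}_m$ and $m \in \mathbb{N}$, where $\|\cdot\|_e$ denotes the distance to the compact operators (on $\ell^2$ and on $X_p$ respectively). -/

import Mathlib

open scoped ENNReal
noncomputable section
namespace Paper

instance : Fact ((1:ℝ≥0∞) ≤ 2) := ⟨one_le_two⟩

section lpMaps
variable {E : ℕ → Type*} [∀ i, NormedAddCommGroup (E i)] [∀ i, NormedSpace ℂ (E i)]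

/-- Canonical coordinate projection `Q i` from the `ℓᵖ`-direct sum onto `E i`. -/
def lpProj (p : ℝ≥0∞) [Fact (1 ≤ p)] (i : ℕ) : lp E p →L[ℂ] E i :=
  LinearMap.mkContinuous
    { toFun := fun f => f i
      map_add' := fun f g => rfl
      map_smul' := fun c f => rfl }
    1 fun f => by
      have h1 : (1:ℝ≥0∞) ≤ p := Fact.out
      have hp0 : p ≠ 0 := by intro h; rw [h] at h1; simp at h1
      simp only [one_mul]
      exact lp.norm_apply_le_norm hp0 f i

/-- Canonical inclusion `J i` of `E i` into the `ℓᵖ`-direct sum. -/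
def lpIncl (p : ℝ≥0∞) [Fact (1 ≤ p)] (hp : p ≠ ⊤) (i : ℕ) : E i →L[ℂ] lp E p :=
  LinearMap.mkContinuous
    { toFun := fun a => lp.single p i a
      map_add' := fun a b => by
        apply lp.ext; funext j
        by_cases h : j = i
        · subst h
          simp [lp.single_apply_self, lp.coeFn_add]
        · simp [lp.single_apply_ne p i _ h, lp.coeFn_add]
      map_smul' := fun c a => lp.single_smul p i c a }
    1 fun a => by
      have h1 : (1:ℝ≥0∞) ≤ p := Fact.out
      have hp0 : p ≠ 0 := by intro h; rw [h] at h1; simp at h1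
      have hpt : 0 < p.toReal := ENNReal.toReal_pos hp0 hp
      have := lp.norm_single (E := E) (lt_of_lt_of_le zero_lt_one h1) i a
      exact le_of_eq (by simpa using this)

end lpMaps

section Fredholm
variable {X Y : Type*} [NormedAddCommGroup X] [NormedSpace ℂ X]
  [NormedAddCommGroup Y] [NormedSpace ℂ Y]

/-- A bounded operator is Fredholm if its kernel is finite dimensional and its range has
finite codimension. -/
def IsFredholm (T : X →L[ℂ] Y) : Prop :=
  FiniteDimensional ℂ (LinearMap.ker (T : X →ₗ[ℂ] Y)) ∧ FiniteDimensional ℂ (Y ⧸ LinearMap.range (T : X →ₗ[ℂ] Y))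

/-- The Fredholm index `dim ker T - codim ran T`. -/
def fredholmIndex (T : X →L[ℂ] Y) : ℤ :=
  (Module.finrank ℂ (LinearMap.ker (T : X →ₗ[ℂ] Y)) : ℤ) - (Module.finrank ℂ (Y ⧸ LinearMap.range (T : X →ₗ[ℂ] Y)) : ℤ)

/-- The essential norm: the distance to the compact operators. -/
def essNorm (T : X →L[ℂ] Y) : ℝ :=
  ⨅ K : {K : X →L[ℂ] Y // IsCompactOperator ⇑K}, ‖T - (K : X →L[ℂ] Y)‖

end Fredholm

/-- The canonical projection of `ℓ²` onto the coordinates in `[r k, r (k+1))`. -/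
def blockProj (r : ℕ → ℕ) (k : ℕ) :
    lp (fun _ : ℕ => ℂ) 2 →L[ℂ] lp (fun _ : ℕ => ℂ) 2 :=
  ∑ i ∈ Finset.Ico (r k) (r (k+1)),
    (lpIncl (E := fun _ : ℕ => ℂ) 2 (by norm_num) i).comp (lpProj 2 i)


/-- `ℓ²(ℕ)`. -/
abbrev L2 := lp (fun _ : ℕ => ℂ) 2

/-- `ℓᵖ(ℕ)`. -/
abbrev Lp (p : ℝ≥0∞) := lp (fun _ : ℕ => ℂ) p

/-- The blocks `ℓ²([r k, r (k+1)))` as abstract finite dimensional Hilbert spaces. -/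
abbrev Eb (r : ℕ → ℕ) : ℕ → Type := fun k => EuclideanSpace ℂ (Fin (r (k+1) - r k))


section Aux
variable {E : ℕ → Type*} [∀ i, NormedAddCommGroup (E i)] [∀ i, NormedSpace ℂ (E i)]
variable (q : ℝ≥0∞) [Fact (1 ≤ q)]

lemma q_ne_zero : q ≠ 0 := by
  have h1 : (1:ℝ≥0∞) ≤ q := Fact.out
  intro h; rw [h] at h1; simp at h1

lemma q_toReal_pos (hq : q ≠ ⊤) : 0 < q.toReal :=
  ENNReal.toReal_pos (q_ne_zero q) hq

@[simp] lemma lpProj_apply (i : ℕ) (x : lp E q) : lpProj q i x = x i := rfl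

lemma lpIncl_apply (hq : q ≠ ⊤) (i : ℕ) (v : E i) :
    lpIncl q hq i v = lp.single q i v := rfl

lemma norm_lpProj_le (i : ℕ) : ‖(lpProj q i : lp E q →L[ℂ] E i)‖ ≤ 1 :=
  LinearMap.mkContinuous_norm_le _ zero_le_one _

lemma norm_lpIncl_le (hq : q ≠ ⊤) (i : ℕ) : ‖(lpIncl q hq i : E i →L[ℂ] lp E q)‖ ≤ 1 :=
  LinearMap.mkContinuous_norm_le _ zero_le_one _

/-- The block matrix entry of an operator on an `lp`-direct sum. -/
def blockOf (hq : q ≠ ⊤) (S : lp E q →L[ℂ] lp E q) (i j : ℕ) : E j →L[ℂ] E i :=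
  (lpProj q i).comp (S.comp (lpIncl q hq j))

lemma norm_blockOf_le (hq : q ≠ ⊤) (S : lp E q →L[ℂ] lp E q) (i j : ℕ) :
    ‖blockOf q hq S i j‖ ≤ ‖S‖ := by
  have h1 := norm_lpProj_le (E := E) q i
  have h2 := norm_lpIncl_le (E := E) q hq j
  have h3 : ‖S.comp (lpIncl q hq j)‖ ≤ ‖S‖ := by
    refine (ContinuousLinearMap.opNorm_comp_le _ _).trans ?_
    nlinarith [norm_nonneg S, norm_nonneg (lpIncl (E := E) q hq j)]
  refine (ContinuousLinearMap.opNorm_comp_le _ _).trans ?_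
  nlinarith [norm_nonneg (S.comp (lpIncl q hq j)), norm_nonneg (lpProj (E := E) q i)]

lemma sum_single_apply_eq {ι : Type*} {σ : ι → ℕ} (hσ : Function.Injective σ)
    (v : ∀ k, E (σ k)) (F : Finset ι) {k₀ : ι} (hk₀ : k₀ ∈ F) :
    (↑(∑ k ∈ F, lp.single q (σ k) (v k)) : ∀ i, E i) (σ k₀) = v k₀ := by
  rw [lp.coeFn_sum, Finset.sum_apply]
  rw [Finset.sum_eq_single_of_mem k₀ hk₀ ?_]
  · exact lp.single_apply_self q _ _
  · intro k hk hne
    refine lp.single_apply_ne q (σ k) (v k) ?_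
    intro h
    exact hne (hσ h).symm

lemma sum_single_apply_ne {ι : Type*} (σ : ι → ℕ)
    (v : ∀ k, E (σ k)) (F : Finset ι) {j : ℕ} (hj : ∀ k ∈ F, σ k ≠ j) :
    (↑(∑ k ∈ F, lp.single q (σ k) (v k)) : ∀ i, E i) j = 0 := by
  rw [lp.coeFn_sum, Finset.sum_apply]
  exact Finset.sum_eq_zero fun k hk => lp.single_apply_ne q (σ k) _ (hj k hk).symm

lemma norm_sum_single_inj (hq : q ≠ ⊤) {ι : Type*} [DecidableEq ι] {σ : ι → ℕ}
    (hσ : Function.Injective σ) (v : ∀ k, E (σ k)) (F : Finset ι) :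
    ‖∑ k ∈ F, lp.single q (σ k) (v k)‖ ^ q.toReal = ∑ k ∈ F, ‖v k‖ ^ q.toReal := by
  have ht := q_toReal_pos q hq
  refine (lp.hasSum_norm ht _).unique ?_
  have h0 : ∀ i ∉ F.image σ,
      ‖(↑(∑ k ∈ F, lp.single q (σ k) (v k)) : ∀ i, E i) i‖ ^ q.toReal = 0 := by
    intro i hi
    rw [sum_single_apply_ne q σ v F ?_]
    · simp [Real.zero_rpow ht.ne']
    · intro k hk h
      exact hi (h ▸ Finset.mem_image_of_mem σ hk)
  have h : HasSum _ _ := hasSum_sum_of_ne_finset_zero h0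
  rw [Finset.sum_image (fun a _ b _ h => hσ h)] at h
  have hcong : (∑ x ∈ F, ‖(↑(∑ k ∈ F, lp.single q (σ k) (v k)) : ∀ i, E i) (σ x)‖ ^ q.toReal)
      = ∑ k ∈ F, ‖v k‖ ^ q.toReal :=
    Finset.sum_congr rfl (fun k hk => by rw [sum_single_apply_eq q hσ v F hk])
  rwa [hcong] at h

lemma rpow_le_rpow_cancel {x y t : ℝ} (hy : 0 ≤ y) (ht : 0 < t)
    (h : x ^ t ≤ y ^ t) (hx : 0 ≤ x) : x ≤ y := by
  by_contra hlt
  push_neg at hlt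
  exact absurd h (not_le.mpr (Real.rpow_lt_rpow hy hlt ht))

end Aux

section Diag
variable {E : ℕ → Type*} [∀ i, NormedAddCommGroup (E i)] [∀ i, NormedSpace ℂ (E i)]
  [∀ i, CompleteSpace (E i)]
variable (q : ℝ≥0∞) [Fact (1 ≤ q)] (hq : q ≠ ⊤) (a b : ℕ)

/-- A single block of a diagonal operator. -/
def diagTerm (B : ∀ k : ℕ, E (k + b) →L[ℂ] E (k + a)) (k : ℕ) : lp E q →L[ℂ] lp E q :=
  (lpIncl q hq (k + a)).comp ((B k).comp (lpProj q (k + b)))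

lemma diagTerm_apply (B : ∀ k : ℕ, E (k + b) →L[ℂ] E (k + a)) (k : ℕ) (x : lp E q) :
    diagTerm q hq a b B k x = lp.single q (k + a) (B k (x (k + b))) := rfl

lemma norm_sum_diagTerm (B : ∀ k : ℕ, E (k + b) →L[ℂ] E (k + a)) (x : lp E q) (F : Finset ℕ) :
    ‖∑ k ∈ F, diagTerm q hq a b B k x‖ ^ q.toReal = ∑ k ∈ F, ‖B k (x (k + b))‖ ^ q.toReal := by
  simpa only [diagTerm_apply] using
    norm_sum_single_inj q hq (add_left_injective a) (fun k => B k (x (k + b))) F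

lemma summable_norm_shift (x : lp E q) (hq : q ≠ ⊤) :
    Summable (fun k => ‖x (k + b)‖ ^ q.toReal) :=
  (lp.hasSum_norm (q_toReal_pos q hq) x).summable.comp_injective (add_left_injective b)

lemma tsum_norm_shift_le (x : lp E q) (hq : q ≠ ⊤) (F : Finset ℕ) :
    ∑ k ∈ F, ‖x (k + b)‖ ^ q.toReal ≤ ‖x‖ ^ q.toReal := by
  have ht := q_toReal_pos q hq
  have h1 : ∑ k ∈ F, ‖x (k + b)‖ ^ q.toReal ≤ ∑' k, ‖x (k + b)‖ ^ q.toReal :=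
    Summable.sum_le_tsum F (fun k _ => Real.rpow_nonneg (norm_nonneg _) _)
      (summable_norm_shift q b x hq)
  refine h1.trans ?_
  rw [lp.norm_rpow_eq_tsum ht]
  exact Summable.tsum_le_tsum_of_inj (· + b) (add_left_injective b)
    (fun j _ => Real.rpow_nonneg (norm_nonneg _) _) (fun k => le_refl _)
    (summable_norm_shift q b x hq) ((lp.memℓp x).summable ht)

lemma summable_diagTerm (B : ∀ k : ℕ, E (k + b) →L[ℂ] E (k + a)) {C : ℝ}
    (hB : ∀ k, ‖B k‖ ≤ C) (x : lp E q) :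
    Summable (fun k => diagTerm q hq a b B k x) := by
  rw [summable_iff_vanishing_norm]
  intro ε hε
  have ht : 0 < q.toReal := q_toReal_pos q hq
  set t := q.toReal with htdef
  set C1 := max C 0 + 1 with hC1def
  have hC1 : 0 < C1 := by positivity
  have hg := summable_norm_shift q b x hq
  obtain ⟨s, hs⟩ := summable_iff_vanishing_norm.mp hg ((ε / C1) ^ t) (by positivity)
  refine ⟨s, fun F hF => ?_⟩
  by_contra hcon
  push_neg at hcon
  have h1 : ε ^ t ≤ ‖∑ k ∈ F, diagTerm q hq a b B k x‖ ^ t :=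
    Real.rpow_le_rpow hε.le hcon ht.le
  rw [norm_sum_diagTerm] at h1
  have h2 : ∑ k ∈ F, ‖B k (x (k + b))‖ ^ t ≤ C1 ^ t * ∑ k ∈ F, ‖x (k + b)‖ ^ t := by
    rw [Finset.mul_sum]
    refine Finset.sum_le_sum fun k _ => ?_
    rw [← Real.mul_rpow hC1.le (norm_nonneg _)]
    refine Real.rpow_le_rpow (norm_nonneg _) ?_ ht.le
    refine ((B k).le_opNorm _).trans ?_
    have hBk : ‖B k‖ ≤ C1 := (hB k).trans (by simp [hC1def]; linarith [le_max_left C 0])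
    exact mul_le_mul_of_nonneg_right hBk (norm_nonneg _)
  have h3 : ∑ k ∈ F, ‖x (k + b)‖ ^ t < (ε / C1) ^ t := by
    have h := hs F hF
    have hnn : 0 ≤ ∑ k ∈ F, ‖x (k + b)‖ ^ t :=
      Finset.sum_nonneg (fun k _ => Real.rpow_nonneg (norm_nonneg _) _)
    rwa [Real.norm_of_nonneg hnn] at h
  have h4 : C1 ^ t * ∑ k ∈ F, ‖x (k + b)‖ ^ t < C1 ^ t * (ε / C1) ^ t :=
    mul_lt_mul_of_pos_left h3 (Real.rpow_pos_of_pos hC1 t)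
  rw [← Real.mul_rpow hC1.le (by positivity), mul_div_cancel₀ ε hC1.ne'] at h4
  linarith

lemma norm_tsum_diagTerm_le (B : ∀ k : ℕ, E (k + b) →L[ℂ] E (k + a)) {C : ℝ}
    (hB : ∀ k, ‖B k‖ ≤ C) (hC0 : 0 ≤ C) (x : lp E q) :
    ‖∑' k, diagTerm q hq a b B k x‖ ≤ C * ‖x‖ := by
  have ht : 0 < q.toReal := q_toReal_pos q hq
  have hsum := (summable_diagTerm q hq a b B hB x).hasSum
  have htend : Filter.Tendsto (fun F : Finset ℕ => ‖∑ k ∈ F, diagTerm q hq a b B k x‖)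
      Filter.atTop (nhds ‖∑' k, diagTerm q hq a b B k x‖) := hsum.norm
  refine le_of_tendsto htend (Filter.Eventually.of_forall fun F => ?_)
  refine rpow_le_rpow_cancel (by positivity) ht ?_ (norm_nonneg _)
  rw [norm_sum_diagTerm, Real.mul_rpow hC0 (norm_nonneg _)]
  calc ∑ k ∈ F, ‖B k (x (k + b))‖ ^ q.toReal
      ≤ ∑ k ∈ F, C ^ q.toReal * ‖x (k + b)‖ ^ q.toReal := by
        refine Finset.sum_le_sum fun k _ => ?_
        rw [← Real.mul_rpow hC0 (norm_nonneg _)]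
        refine Real.rpow_le_rpow (norm_nonneg _) ?_ ht.le
        exact ((B k).le_opNorm _).trans (mul_le_mul_of_nonneg_right (hB k) (norm_nonneg _))
    _ = C ^ q.toReal * ∑ k ∈ F, ‖x (k + b)‖ ^ q.toReal := by rw [Finset.mul_sum]
    _ ≤ C ^ q.toReal * ‖x‖ ^ q.toReal := by
        refine mul_le_mul_of_nonneg_left (tsum_norm_shift_le q b x hq F) ?_
        positivity

/-- The diagonal operator determined by blocks `B k : E (k+b) → E (k+a)`. -/
def diagOp (B : ∀ k : ℕ, E (k + b) →L[ℂ] E (k + a)) (hB : ∃ C, ∀ k, ‖B k‖ ≤ C) :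
    lp E q →L[ℂ] lp E q :=
  LinearMap.mkContinuous
    { toFun := fun x => ∑' k, diagTerm q hq a b B k x
      map_add' := fun x y => by
        have h1 := summable_diagTerm q hq a b B hB.choose_spec x
        have h2 := summable_diagTerm q hq a b B hB.choose_spec y
        show (∑' k, diagTerm q hq a b B k (x + y)) = _
        rw [← (h1.hasSum.add h2.hasSum).tsum_eq]
        exact tsum_congr fun k => map_add _ x y
      map_smul' := fun c x => by
        have h1 := summable_diagTerm q hq a b B hB.choose_spec x
        show (∑' k, diagTerm q hq a b B k (c • x)) = _
        rw [RingHom.id_apply, ← (h1.hasSum.const_smul c).tsum_eq]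
        exact tsum_congr fun k => map_smul _ c x }
    (max hB.choose 0) fun x =>
      norm_tsum_diagTerm_le q hq a b B
        (fun k => (hB.choose_spec k).trans (le_max_left _ _)) (le_max_right _ _) x

lemma diagOp_apply (B : ∀ k : ℕ, E (k + b) →L[ℂ] E (k + a)) (hB : ∃ C, ∀ k, ‖B k‖ ≤ C)
    (x : lp E q) : diagOp q hq a b B hB x = ∑' k, diagTerm q hq a b B k x := rfl

lemma diagOp_norm_le (B : ∀ k : ℕ, E (k + b) →L[ℂ] E (k + a)) (hB : ∃ C, ∀ k, ‖B k‖ ≤ C)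
    {C : ℝ} (hC : ∀ k, ‖B k‖ ≤ C) (hC0 : 0 ≤ C) : ‖diagOp q hq a b B hB‖ ≤ C :=
  ContinuousLinearMap.opNorm_le_bound _ hC0 fun x =>
    norm_tsum_diagTerm_le q hq a b B hC hC0 x

lemma hasSum_diagOp (B : ∀ k : ℕ, E (k + b) →L[ℂ] E (k + a)) (hB : ∃ C, ∀ k, ‖B k‖ ≤ C)
    (x : lp E q) :
    HasSum (fun k => diagTerm q hq a b B k x) (diagOp q hq a b B hB x) :=
  (summable_diagTerm q hq a b B hB.choose_spec x).hasSum

lemma diagOp_apply_coord (B : ∀ k : ℕ, E (k + b) →L[ℂ] E (k + a))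
    (hB : ∃ C, ∀ k, ‖B k‖ ≤ C) (x : lp E q) (k₀ : ℕ) :
    (diagOp q hq a b B hB x : ∀ i, E i) (k₀ + a) = B k₀ (x (k₀ + b)) := by
  have h := (hasSum_diagOp q hq a b B hB x).mapL (lpProj q (k₀ + a))
  simp only [lpProj_apply] at h
  have h3 : ∀ k ≠ k₀, (diagTerm q hq a b B k x : ∀ i, E i) (k₀ + a) = 0 := by
    intro k hk
    rw [diagTerm_apply]
    exact lp.single_apply_ne q (k + a) _ (by omega)
  have h4 := hasSum_single (f := fun k => (diagTerm q hq a b B k x : ∀ i, E i) (k₀ + a)) k₀ h3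
  have h5 : (fun k => (diagTerm q hq a b B k x : ∀ i, E i) (k₀ + a)) k₀
      = B k₀ (x (k₀ + b)) := by
    show (diagTerm q hq a b B k₀ x : ∀ i, E i) (k₀ + a) = _
    rw [diagTerm_apply]
    exact lp.single_apply_self q _ _
  exact h.unique (h5 ▸ h4)

lemma diagOp_apply_coord_zero (B : ∀ k : ℕ, E (k + b) →L[ℂ] E (k + a))
    (hB : ∃ C, ∀ k, ‖B k‖ ≤ C) (x : lp E q) (i : ℕ) (hi : i < a) :
    (diagOp q hq a b B hB x : ∀ i, E i) i = 0 := by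
  have h := (hasSum_diagOp q hq a b B hB x).mapL (lpProj q i)
  simp only [lpProj_apply] at h
  refine h.unique ?_
  have h3 : (fun k => (diagTerm q hq a b B k x : ∀ i, E i) i) = fun _ => (0 : E i) := by
    funext k
    rw [diagTerm_apply]
    exact lp.single_apply_ne q (k + a) _ (by omega)
  rw [h3]
  exact hasSum_zero

lemma diagTerm_add (B B' : ∀ k : ℕ, E (k + b) →L[ℂ] E (k + a)) (k : ℕ) :
    diagTerm q hq a b (fun k => B k + B' k) k =
      diagTerm q hq a b B k + diagTerm q hq a b B' k := by
  unfold diagTerm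
  rw [ContinuousLinearMap.add_comp, ContinuousLinearMap.comp_add]

lemma diagOp_add (B B' : ∀ k : ℕ, E (k + b) →L[ℂ] E (k + a))
    (hB : ∃ C, ∀ k, ‖B k‖ ≤ C) (hB' : ∃ C, ∀ k, ‖B' k‖ ≤ C)
    (hBB' : ∃ C, ∀ k, ‖B k + B' k‖ ≤ C) :
    diagOp q hq a b (fun k => B k + B' k) hBB' =
      diagOp q hq a b B hB + diagOp q hq a b B' hB' := by
  refine ContinuousLinearMap.ext fun x => ?_
  have h1 := hasSum_diagOp q hq a b B hB x
  have h2 := hasSum_diagOp q hq a b B' hB' x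
  have h3 : HasSum (fun k => diagTerm q hq a b (fun k => B k + B' k) k x)
      (diagOp q hq a b B hB x + diagOp q hq a b B' hB' x) := by
    refine HasSum.congr_fun (h1.add h2) fun k => ?_
    rw [diagTerm_add]
    rfl
  rw [ContinuousLinearMap.add_apply]
  exact ((hasSum_diagOp q hq a b _ hBB' x).unique h3)
lemma diagOp_congr (B B' : ∀ k : ℕ, E (k + b) →L[ℂ] E (k + a))
    (hB : ∃ C, ∀ k, ‖B k‖ ≤ C) (hB' : ∃ C, ∀ k, ‖B' k‖ ≤ C)
    (h : ∀ k, B k = B' k) : diagOp q hq a b B hB = diagOp q hq a b B' hB' := by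
  have hfun : B = B' := funext h
  subst hfun
  rfl

lemma isCompactOperator_of_finiteDimensional {F X : Type*} [NormedAddCommGroup F]
    [NormedSpace ℂ F] [FiniteDimensional ℂ F] [NormedAddCommGroup X] [NormedSpace ℂ X]
    (g : F →L[ℂ] X) : IsCompactOperator ⇑g := by
  refine ⟨g '' Metric.closedBall 0 1, ?_, ?_⟩
  · exact (isCompact_closedBall (0 : F) 1).image g.continuous
  · exact Filter.mem_of_superset (Metric.closedBall_mem_nhds (0 : F) one_pos)
      (Set.subset_preimage_image _ _)

lemma isCompactOperator_diagTerm [∀ i, FiniteDimensional ℂ (E i)]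
    (B : ∀ k : ℕ, E (k + b) →L[ℂ] E (k + a)) (k : ℕ) :
    IsCompactOperator ⇑(diagTerm q hq a b B k) := by
  have h : IsCompactOperator ⇑((lpIncl q hq (k + a)).comp (B k)) :=
    isCompactOperator_of_finiteDimensional _
  have heq : diagTerm q hq a b B k = ((lpIncl q hq (k + a)).comp (B k)).comp (lpProj q (k + b)) := by
    rw [ContinuousLinearMap.comp_assoc]
    rfl
  rw [heq]
  exact h.comp_clm _

lemma isCompactOperator_sum {X Y : Type*} [NormedAddCommGroup X] [NormedSpace ℂ X]
    [NormedAddCommGroup Y] [NormedSpace ℂ Y] {ι : Type*} (F : Finset ι)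
    (f : ι → (X →L[ℂ] Y)) (h : ∀ k ∈ F, IsCompactOperator ⇑(f k)) :
    IsCompactOperator ⇑(∑ k ∈ F, f k) := by
  classical
  induction F using Finset.induction with
  | empty => simpa using (isCompactOperator_zero (M₁ := X) (M₂ := Y))
  | @insert c F hc ih =>
    rw [Finset.sum_insert hc]
    have h1 := (h c (Finset.mem_insert_self c F)).add
      (ih fun k hk => h k (Finset.mem_insert_of_mem hk))
    exact h1

lemma diagOp_eq_sum_of_support (B : ∀ k : ℕ, E (k + b) →L[ℂ] E (k + a))
    (hB : ∃ C, ∀ k, ‖B k‖ ≤ C) (N : ℕ) (h0 : ∀ k, N ≤ k → B k = 0) :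
    diagOp q hq a b B hB = ∑ k ∈ Finset.range N, diagTerm q hq a b B k := by
  refine ContinuousLinearMap.ext fun x => ?_
  rw [diagOp_apply, tsum_eq_sum (s := Finset.range N) ?_, ContinuousLinearMap.sum_apply]
  intro k hk
  have hBk : B k = 0 := h0 k (by simpa using hk)
  rw [diagTerm_apply, hBk, ContinuousLinearMap.zero_apply, ← lpIncl_apply q hq, map_zero]

lemma isCompactOperator_diagOp_of_support [∀ i, FiniteDimensional ℂ (E i)]
    (B : ∀ k : ℕ, E (k + b) →L[ℂ] E (k + a)) (hB : ∃ C, ∀ k, ‖B k‖ ≤ C) (N : ℕ)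
    (h0 : ∀ k, N ≤ k → B k = 0) : IsCompactOperator ⇑(diagOp q hq a b B hB) := by
  rw [diagOp_eq_sum_of_support q hq a b B hB N h0]
  exact isCompactOperator_sum _ _ fun k _ => isCompactOperator_diagTerm q hq a b B k

end Diag

section Identity
variable {E : ℕ → Type*} [∀ i, NormedAddCommGroup (E i)] [∀ i, NormedSpace ℂ (E i)]
  [∀ i, CompleteSpace (E i)]
variable (q : ℝ≥0∞) [Fact (1 ≤ q)]

lemma eq_of_apply_single_eq (hq : q ≠ ⊤) (A S : lp E q →L[ℂ] lp E q)
    (h : ∀ (j : ℕ) (v : E j), A (lp.single q j v) = S (lp.single q j v)) : A = S := by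
  refine ContinuousLinearMap.ext fun x => ?_
  have hx := lp.hasSum_single hq x
  have hA := hx.mapL A
  have hS := hx.mapL S
  exact hA.unique (HasSum.congr_fun hS fun j => h j (x j))

lemma sum_diagOp_eq (hq : q ≠ ⊤) (S : lp E q →L[ℂ] lp E q) (m : ℕ)
    (hpat : ∀ i j : ℕ, (m : ℤ) < |(i : ℤ) - (j : ℤ)| → blockOf q hq S i j = 0) :
    ∑ d ∈ Finset.Icc (-(m : ℤ)) (m : ℤ),
      diagOp q hq d.toNat (-d).toNat
        (fun k => blockOf q hq S (k + d.toNat) (k + (-d).toNat))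
        ⟨‖S‖, fun k => norm_blockOf_le q hq S _ _⟩ = S := by
  refine eq_of_apply_single_eq q hq _ _ fun j v => ?_
  refine lp.ext (funext fun i => ?_)
  have hcoe : (↑((∑ d ∈ Finset.Icc (-(m : ℤ)) (m : ℤ),
      diagOp q hq d.toNat (-d).toNat
        (fun k => blockOf q hq S (k + d.toNat) (k + (-d).toNat))
        ⟨‖S‖, fun k => norm_blockOf_le q hq S _ _⟩) (lp.single q j v)) : ∀ i, E i) i
      = ∑ d ∈ Finset.Icc (-(m : ℤ)) (m : ℤ),
        (↑((diagOp q hq d.toNat (-d).toNat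
          (fun k => blockOf q hq S (k + d.toNat) (k + (-d).toNat))
          ⟨‖S‖, fun k => norm_blockOf_le q hq S _ _⟩) (lp.single q j v)) : ∀ i, E i) i := by
    rw [ContinuousLinearMap.sum_apply, lp.coeFn_sum, Finset.sum_apply]
  rw [hcoe]
  have hzero : ∀ d ∈ Finset.Icc (-(m : ℤ)) (m : ℤ), d ≠ (i : ℤ) - (j : ℤ) →
      (↑((diagOp q hq d.toNat (-d).toNat
        (fun k => blockOf q hq S (k + d.toNat) (k + (-d).toNat))
        ⟨‖S‖, fun k => norm_blockOf_le q hq S _ _⟩) (lp.single q j v)) : ∀ i, E i) i = 0 := by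
    intro d _ hne
    by_cases hi : d.toNat ≤ i
    · obtain ⟨k₀, rfl⟩ : ∃ k₀, i = k₀ + d.toNat := ⟨i - d.toNat, by omega⟩
      rw [diagOp_apply_coord]
      have hj : j ≠ k₀ + (-d).toNat := by omega
      rw [lp.single_apply_ne q j v hj.symm, map_zero]
    · exact diagOp_apply_coord_zero q hq d.toNat (-d).toNat _ _ _ i (by omega)
  by_cases hband : |(i : ℤ) - (j : ℤ)| ≤ (m : ℤ)
  · have hab := abs_le.mp hband
    rw [Finset.sum_eq_single_of_mem ((i : ℤ) - (j : ℤ))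
      (by rw [Finset.mem_Icc]; exact abs_le.mp hband) (fun d hd hne => hzero d hd hne)]
    obtain ⟨d₀, hd⟩ : ∃ d₀ : ℤ, (i : ℤ) - (j : ℤ) = d₀ := ⟨_, rfl⟩
    rw [hd]
    obtain ⟨k₀, hik, hjk⟩ : ∃ k₀, i = k₀ + d₀.toNat ∧ j = k₀ + (-d₀).toNat :=
      ⟨min i j, by omega, by omega⟩
    subst hik
    subst hjk
    rw [diagOp_apply_coord, lp.single_apply_self]
    rfl
  · have habs := lt_abs.mp (not_le.mp hband)
    rw [Finset.sum_eq_zero (fun d hd => hzero d hd (by rw [Finset.mem_Icc] at hd; omega))]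
    have hS0 : blockOf q hq S i j = 0 := hpat i j (not_le.mp hband)
    have : (↑(S (lp.single q j v)) : ∀ i, E i) i = blockOf q hq S i j v := rfl
    rw [this, hS0, ContinuousLinearMap.zero_apply]

end Identity

section FredholmAux
variable {X Y : Type*} [NormedAddCommGroup X] [NormedSpace ℂ X]
  [NormedAddCommGroup Y] [NormedSpace ℂ Y]

instance : Nonempty {K : X →L[ℂ] Y // IsCompactOperator ⇑K} :=
  ⟨⟨0, isCompactOperator_zero⟩⟩

lemma essNorm_nonneg (T : X →L[ℂ] Y) : 0 ≤ essNorm T :=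
  le_ciInf fun K => norm_nonneg _

lemma essNorm_le (T : X →L[ℂ] Y) (K : X →L[ℂ] Y) (hK : IsCompactOperator ⇑K) :
    essNorm T ≤ ‖T - K‖ := by
  have hbdd : BddBelow (Set.range
      fun K : {K : X →L[ℂ] Y // IsCompactOperator ⇑K} => ‖T - (K : X →L[ℂ] Y)‖) := by
    refine ⟨0, ?_⟩
    rintro x ⟨K', rfl⟩
    exact norm_nonneg _
  exact ciInf_le hbdd ⟨K, hK⟩

lemma exists_compact_near (T : X →L[ℂ] Y) {ε : ℝ} (hε : 0 < ε) :
    ∃ K : X →L[ℂ] Y, IsCompactOperator ⇑K ∧ ‖T - K‖ < essNorm T + ε := by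
  have h : essNorm T < essNorm T + ε := lt_add_of_pos_right _ hε
  obtain ⟨⟨K, hK⟩, hlt⟩ := exists_lt_of_ciInf_lt h
  exact ⟨K, hK, hlt⟩

lemma exists_norm_gt (A : X →L[ℂ] Y) {c : ℝ} (hc : 0 ≤ c) (h : c < ‖A‖) :
    ∃ x, ‖x‖ ≤ 1 ∧ c < ‖A x‖ := by
  by_contra hcon
  push_neg at hcon
  have hb : ‖A‖ ≤ c := by
    refine A.opNorm_le_bound hc fun x => ?_
    rcases eq_or_ne x 0 with rfl | hx
    · simp
    · have hxn : 0 < ‖x‖ := norm_pos_iff.mpr hx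
      have h1 := hcon (‖x‖⁻¹ • x)
        (by rw [norm_smul, norm_inv, norm_norm, inv_mul_cancel₀ hxn.ne'])
      rw [A.map_smul_of_tower, norm_smul, norm_inv, norm_norm] at h1
      calc ‖A x‖ = ‖x‖ * (‖x‖⁻¹ * ‖A x‖) := by field_simp
        _ ≤ ‖x‖ * c := mul_le_mul_of_nonneg_left h1 hxn.le
        _ = c * ‖x‖ := mul_comm _ _
  exact absurd h (not_lt.mpr hb)

end FredholmAux

section CompactSmall
variable {E : ℕ → Type*} [∀ i, NormedAddCommGroup (E i)] [∀ i, NormedSpace ℂ (E i)]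
  [∀ i, CompleteSpace (E i)]
variable (q : ℝ≥0∞) [Fact (1 ≤ q)]

lemma tendsto_norm_comp_lpIncl (hq : q ≠ ⊤) (hq1 : 1 < q) (K : lp E q →L[ℂ] lp E q)
    (hK : IsCompactOperator ⇑K) :
    Filter.Tendsto (fun j => ‖K.comp (lpIncl q hq j)‖) Filter.atTop (nhds 0) := by
  have ht : 0 < q.toReal := q_toReal_pos q hq
  have ht1 : 1 < q.toReal := by
    rw [← ENNReal.toReal_one]
    exact (ENNReal.toReal_lt_toReal (by simp) hq).mpr hq1
  by_contra hcon
  obtain ⟨δ, hδ, hfreq⟩ : ∃ δ > 0, ∃ᶠ j in Filter.atTop, δ ≤ ‖K.comp (lpIncl q hq j)‖ := by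
    by_contra h2
    have h2' : ∀ δ : ℝ, 0 < δ → ¬ ∃ᶠ j in Filter.atTop, δ ≤ ‖K.comp (lpIncl q hq j)‖ :=
      fun δ hδ hf => h2 ⟨δ, hδ, hf⟩
    apply hcon
    refine Metric.tendsto_atTop.mpr fun ε hε => ?_
    have h3 : ∀ᶠ j in Filter.atTop, ¬ (ε/2 ≤ ‖K.comp (lpIncl q hq j)‖) :=
      Filter.not_frequently.mp (h2' (ε/2) (by positivity))
    obtain ⟨N, hN⟩ := Filter.eventually_atTop.mp h3
    refine ⟨N, fun n hn => ?_⟩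
    have h4 := not_le.mp (hN n hn)
    rw [Real.dist_eq, sub_zero, abs_of_nonneg (norm_nonneg _)]
    linarith
  -- strictly monotone sequence of indices with large blocks
  obtain ⟨φ, hφmono, hφ⟩ := Filter.extraction_of_frequently_atTop hfreq
  -- unit vectors with large image
  have hex : ∀ n, ∃ v : E (φ n), ‖v‖ ≤ 1 ∧ δ/2 < ‖K (lp.single q (φ n) v)‖ := by
    intro n
    obtain ⟨v, hv1, hv2⟩ := exists_norm_gt (c := δ/2) (K.comp (lpIncl q hq (φ n)))
      (by positivity) (by linarith [hφ n])
    exact ⟨v, hv1, hv2⟩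
  choose v hv1 hv2 using hex
  set u : ℕ → lp E q := fun n => lp.single q (φ n) (v n) with hu
  have hun : ∀ n, ‖u n‖ ≤ 1 := by
    intro n
    have h5 := (lpIncl q hq (φ n)).le_opNorm (v n)
    have h6 := norm_lpIncl_le (E := E) q hq (φ n)
    have := mul_le_mul_of_nonneg_right h6 (norm_nonneg (v n))
    calc ‖u n‖ ≤ ‖(lpIncl q hq (φ n) : E (φ n) →L[ℂ] lp E q)‖ * ‖v n‖ := h5
      _ ≤ 1 * ‖v n‖ := this
      _ ≤ 1 := by rw [one_mul]; exact hv1 n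
  -- compactness: extract a convergent subsequence of K (u n)
  obtain ⟨W, hWc, hWmem⟩ := hK
  obtain ⟨r, hr, hball⟩ := Metric.mem_nhds_iff.mp hWmem
  have hmemW : ∀ n, K ((r/2) • u n) ∈ W := by
    intro n
    apply hball
    rw [Metric.mem_ball, dist_zero_right, norm_smul, Real.norm_eq_abs,
      abs_of_pos (by positivity : (0:ℝ) < r/2)]
    nlinarith [hun n, norm_nonneg (u n)]
  obtain ⟨y, _, ψ, hψmono, hy⟩ := hWc.tendsto_subseq (fun n => hmemW n)
  set w : lp E q := (2/r) • y with hw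
  have htendw : Filter.Tendsto (fun i => K (u (ψ i))) Filter.atTop (nhds w) := by
    have h7 := hy.const_smul (2/r)
    refine h7.congr fun i => ?_
    show (2/r) • K ((r/2) • u (ψ i)) = K (u (ψ i))
    rw [ContinuousLinearMap.map_smul_of_tower, smul_smul,
      show (2/r) * (r/2) = 1 by field_simp, one_smul]
  have hwnorm : δ/2 ≤ ‖w‖ := by
    have h8 : Filter.Tendsto (fun i => ‖K (u (ψ i))‖) Filter.atTop (nhds ‖w‖) := htendw.norm
    refine ge_of_tendsto h8 (Filter.Eventually.of_forall fun i => (hv2 (ψ i)).le)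
  -- refine to a rapidly convergent subsequence
  obtain ⟨φ₂, hφ₂mono, hsmall⟩ := Filter.extraction_forall_of_eventually
    (P := fun i n => ‖K (u (ψ n)) - w‖ < (1/2) ^ i)
    (fun i => by
      have := Metric.tendsto_atTop.mp htendw ((1/2) ^ i) (by positivity)
      obtain ⟨N, hN⟩ := this
      refine Filter.eventually_atTop.mpr ⟨N, fun n hn => ?_⟩
      have := hN n hn
      rwa [dist_eq_norm] at this)
  set χ : ℕ → ℕ := fun i => ψ (φ₂ i) with hχ
  have hχmono : StrictMono χ := hψmono.comp hφ₂mono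
  -- the test vectors
  set z : ℕ → lp E q := fun n => ∑ i ∈ Finset.range n, u (χ i) with hz
  have hznorm : ∀ n : ℕ, ‖z n‖ ≤ (n : ℝ) ^ (1 / q.toReal) := by
    intro n
    refine rpow_le_rpow_cancel (by positivity) ht ?_ (norm_nonneg _)
    have h9 : ((n : ℝ) ^ (1 / q.toReal)) ^ q.toReal = (n : ℝ) := by
      rw [← Real.rpow_mul (Nat.cast_nonneg n), one_div_mul_cancel ht.ne', Real.rpow_one]
    rw [h9]
    have h10 := norm_sum_single_inj q hq (σ := fun i => φ (χ i))
      ((hφmono.comp hχmono).injective) (fun i => v (χ i)) (Finset.range n)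
    rw [hz]
    simp only []
    rw [show (∑ i ∈ Finset.range n, u (χ i)) =
      ∑ i ∈ Finset.range n, lp.single q (φ (χ i)) (v (χ i)) from rfl, h10]
    calc ∑ i ∈ Finset.range n, ‖v (χ i)‖ ^ q.toReal
        ≤ ∑ i ∈ Finset.range n, 1 := by
          refine Finset.sum_le_sum fun i _ => ?_
          exact Real.rpow_le_one (norm_nonneg _) (hv1 (χ i)) ht.le
      _ = n := by simp
  -- lower bound for ‖K (z n)‖
  have hlow : ∀ n : ℕ, (n : ℝ) * (δ/2) - 2 ≤ ‖K (z n)‖ := by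
    intro n
    have hKz : K (z n) = n • w + ∑ i ∈ Finset.range n, (K (u (χ i)) - w) := by
      rw [hz]
      simp only []
      rw [map_sum]
      rw [Finset.sum_sub_distrib, Finset.sum_const, Finset.card_range]
      abel
    have hgeo : ∑ i ∈ Finset.range n, ‖K (u (χ i)) - w‖ ≤ 2 := by
      refine (Finset.sum_le_sum fun i (_ : i ∈ Finset.range n) => (hsmall i).le).trans
        (sum_geometric_two_le n)
    have hsum : ‖∑ i ∈ Finset.range n, (K (u (χ i)) - w)‖ ≤ 2 :=
      (norm_sum_le _ _).trans hgeo
    have hnw : ‖(n : ℕ) • w‖ = (n : ℝ) * ‖w‖ := by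
      rw [← Nat.cast_smul_eq_nsmul ℝ, norm_smul, Real.norm_natCast]
    have htri : ‖(n : ℕ) • w‖ - ‖∑ i ∈ Finset.range n, (K (u (χ i)) - w)‖ ≤ ‖K (z n)‖ := by
      rw [hKz]
      have h11 := norm_add_le ((n : ℕ) • w + ∑ i ∈ Finset.range n, (K (u (χ i)) - w))
        (-(∑ i ∈ Finset.range n, (K (u (χ i)) - w)))
      rw [add_neg_cancel_right, norm_neg] at h11
      linarith
    have h12 : (n : ℝ) * (δ/2) ≤ (n : ℝ) * ‖w‖ :=
      mul_le_mul_of_nonneg_left hwnorm (Nat.cast_nonneg n)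
    rw [hnw] at htri
    linarith
  -- contradiction via growth rates
  have hK1 : ∀ n : ℕ, (n : ℝ) * (δ/2) - 2 ≤ ‖K‖ * (n : ℝ) ^ (1/q.toReal) := by
    intro n
    refine (hlow n).trans ((K.le_opNorm _).trans ?_)
    exact mul_le_mul_of_nonneg_left (hznorm n) (norm_nonneg (K : lp E q →L[ℂ] lp E q))
  have hdiv : ∀ n : ℕ, 1 ≤ n → δ/2 ≤ ‖K‖ * (n : ℝ) ^ (1/q.toReal - 1) + 2 * (n : ℝ)⁻¹ := by
    intro n hn
    have hnp : (0:ℝ) < n := by exact_mod_cast Nat.lt_of_lt_of_le Nat.zero_lt_one hn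
    have hrw : (n : ℝ) ^ (1/q.toReal - 1) = (n : ℝ) ^ (1/q.toReal) * (n : ℝ)⁻¹ := by
      rw [Real.rpow_sub hnp, Real.rpow_one, div_eq_mul_inv]
    have h2 : (δ/2) * n ≤ ‖K‖ * (n : ℝ) ^ (1/q.toReal) + 2 := by linarith [hK1 n]
    rw [hrw]
    calc δ/2 = ((δ/2) * n) * (n : ℝ)⁻¹ := by field_simp
      _ ≤ (‖K‖ * (n : ℝ) ^ (1/q.toReal) + 2) * (n : ℝ)⁻¹ :=
          mul_le_mul_of_nonneg_right h2 (inv_nonneg.mpr hnp.le)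
      _ = ‖K‖ * ((n : ℝ) ^ (1/q.toReal) * (n : ℝ)⁻¹) + 2 * (n : ℝ)⁻¹ := by ring
  have htends : Filter.Tendsto
      (fun n : ℕ => ‖K‖ * (n : ℝ) ^ (1/q.toReal - 1) + 2 * (n : ℝ)⁻¹)
      Filter.atTop (nhds (‖K‖ * 0 + 2 * 0)) := by
    refine Filter.Tendsto.add (Filter.Tendsto.const_mul _ ?_) (Filter.Tendsto.const_mul _ ?_)
    · have hneg : 0 < -(1/q.toReal - 1) := by
        have h13 : 1/q.toReal < 1 := by rw [div_lt_one ht]; exact ht1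
        linarith
      have h := (tendsto_rpow_neg_atTop hneg).comp
        (tendsto_natCast_atTop_atTop (R := ℝ))
      simpa [neg_neg, Function.comp_def] using h
    · exact tendsto_inv_atTop_zero.comp (tendsto_natCast_atTop_atTop (R := ℝ))
  have hfinal : δ/2 ≤ ‖K‖ * 0 + 2 * 0 :=
    ge_of_tendsto htends (Filter.eventually_atTop.mpr ⟨1, fun n hn => hdiv n hn⟩)
  simp only [mul_zero, add_zero] at hfinal
  linarith

end CompactSmall

section MainLemmas
variable {E : ℕ → Type*} [∀ i, NormedAddCommGroup (E i)] [∀ i, NormedSpace ℂ (E i)]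
  [∀ i, CompleteSpace (E i)]

lemma blockOf_sub (q : ℝ≥0∞) [Fact (1 ≤ q)] (hq : q ≠ ⊤) (S K : lp E q →L[ℂ] lp E q)
    (i j : ℕ) : blockOf q hq (S - K) i j = blockOf q hq S i j - blockOf q hq K i j := by
  unfold blockOf
  rw [ContinuousLinearMap.sub_comp, ContinuousLinearMap.comp_sub]

lemma eventually_block_le (q : ℝ≥0∞) [Fact (1 ≤ q)] (hq : q ≠ ⊤) (hq1 : 1 < q)
    (S : lp E q →L[ℂ] lp E q) (a b : ℕ) {ε : ℝ} (hε : 0 < ε) :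
    ∀ᶠ k in Filter.atTop, ‖blockOf q hq S (k + a) (k + b)‖ ≤ essNorm S + ε := by
  obtain ⟨K, hK, hKnear⟩ := exists_compact_near S (half_pos hε)
  have htend := tendsto_norm_comp_lpIncl q hq hq1 K hK
  have htend2 : Filter.Tendsto (fun k : ℕ => ‖K.comp (lpIncl q hq (k + b))‖)
      Filter.atTop (nhds 0) := htend.comp (Filter.tendsto_add_atTop_nat b)
  obtain ⟨N, hN⟩ := Metric.tendsto_atTop.mp htend2 (ε/2) (by positivity)
  refine Filter.eventually_atTop.mpr ⟨N, fun k hk => ?_⟩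
  have h1 : ‖K.comp (lpIncl q hq (k + b))‖ < ε/2 := by
    have := hN k hk
    rwa [Real.dist_eq, sub_zero, abs_of_nonneg (norm_nonneg _)] at this
  have hsplit : blockOf q hq S (k+a) (k+b) =
      blockOf q hq (S - K) (k+a) (k+b) + blockOf q hq K (k+a) (k+b) := by
    rw [blockOf_sub]
    abel
  have h2 : ‖blockOf q hq (S - K) (k+a) (k+b)‖ ≤ ‖S - K‖ := norm_blockOf_le q hq _ _ _
  have h3 : ‖blockOf q hq K (k+a) (k+b)‖ ≤ ‖K.comp (lpIncl q hq (k+b))‖ := by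
    unfold blockOf
    refine (ContinuousLinearMap.opNorm_comp_le _ _).trans ?_
    have h4 := norm_lpProj_le (E := E) q (k+a)
    nlinarith [norm_nonneg (K.comp (lpIncl (E := E) q hq (k+b)))]
  calc ‖blockOf q hq S (k+a) (k+b)‖
      ≤ ‖blockOf q hq (S - K) (k+a) (k+b)‖ + ‖blockOf q hq K (k+a) (k+b)‖ := by
        rw [hsplit]; exact norm_add_le _ _
    _ ≤ (essNorm S + ε/2) + ε/2 := add_le_add (h2.trans hKnear.le) (h3.trans h1.le)
    _ = essNorm S + ε := by ring

lemma essNorm_le_of_banded (q : ℝ≥0∞) [Fact (1 ≤ q)] (hq : q ≠ ⊤)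
    [∀ i, FiniteDimensional ℂ (E i)]
    (S : lp E q →L[ℂ] lp E q) (m N : ℕ) (C : ℝ) (hC0 : 0 ≤ C)
    (hpat : ∀ i j : ℕ, (m : ℤ) < |(i : ℤ) - (j : ℤ)| → blockOf q hq S i j = 0)
    (hC : ∀ d ∈ Finset.Icc (-(m : ℤ)) (m : ℤ), ∀ k : ℕ, N ≤ k →
      ‖blockOf q hq S (k + d.toNat) (k + (-d).toNat)‖ ≤ C) :
    essNorm S ≤ (2 * (m : ℝ) + 1) * C := by
  classical
  have heq := sum_diagOp_eq q hq S m hpat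
  set Bfull : ∀ d : ℤ, ∀ k : ℕ, E (k + (-d).toNat) →L[ℂ] E (k + d.toNat) :=
    fun d k => blockOf q hq S (k + d.toNat) (k + (-d).toNat) with hBfull
  set Btr : ∀ d : ℤ, ∀ k : ℕ, E (k + (-d).toNat) →L[ℂ] E (k + d.toNat) :=
    fun d k => if N ≤ k then Bfull d k else 0 with hBtr
  set Blo : ∀ d : ℤ, ∀ k : ℕ, E (k + (-d).toNat) →L[ℂ] E (k + d.toNat) :=
    fun d k => if N ≤ k then 0 else Bfull d k with hBlo
  have hbfull : ∀ d k, ‖Bfull d k‖ ≤ ‖S‖ := fun d k => norm_blockOf_le q hq S _ _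
  have hbtrS : ∀ d k, ‖Btr d k‖ ≤ ‖S‖ := by
    intro d k
    by_cases h : N ≤ k
    · simp only [hBtr, if_pos h]; exact hbfull d k
    · simp only [hBtr, if_neg h, norm_zero]; exact norm_nonneg S
  have hbloS : ∀ d k, ‖Blo d k‖ ≤ ‖S‖ := by
    intro d k
    by_cases h : N ≤ k
    · simp only [hBlo, if_pos h, norm_zero]; exact norm_nonneg S
    · simp only [hBlo, if_neg h]; exact hbfull d k
  set Ktot : lp E q →L[ℂ] lp E q :=
    ∑ d ∈ Finset.Icc (-(m : ℤ)) (m : ℤ),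
      diagOp q hq d.toNat (-d).toNat (Blo d) ⟨‖S‖, hbloS d⟩ with hKtot
  have hKc : IsCompactOperator ⇑Ktot := by
    refine isCompactOperator_sum _ _ fun d _ => ?_
    refine isCompactOperator_diagOp_of_support q hq _ _ _ _ N fun k hk => ?_
    simp only [hBlo, if_pos hk]
  have hSK : S - Ktot = ∑ d ∈ Finset.Icc (-(m : ℤ)) (m : ℤ),
      diagOp q hq d.toNat (-d).toNat (Btr d) ⟨‖S‖, hbtrS d⟩ := by
    conv_lhs => rw [← heq]
    rw [← Finset.sum_sub_distrib]
    refine Finset.sum_congr rfl fun d _ => ?_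
    rw [sub_eq_iff_eq_add]
    have hXX : ∃ C', ∀ k : ℕ, ‖Btr d k + Blo d k‖ ≤ C' :=
      ⟨‖S‖ + ‖S‖, fun k => (norm_add_le _ _).trans (add_le_add (hbtrS d k) (hbloS d k))⟩
    have hcong := diagOp_congr q hq d.toNat (-d).toNat
      (fun k => blockOf q hq S (k + d.toNat) (k + (-d).toNat))
      (fun k => Btr d k + Blo d k)
      ⟨‖S‖, fun k => norm_blockOf_le q hq S _ _⟩ hXX
      (fun k => by
        by_cases h : N ≤ k
        · simp only [hBtr, hBlo, hBfull, if_pos h, add_zero]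
        · simp only [hBtr, hBlo, hBfull, if_neg h, zero_add])
    exact hcong.trans (diagOp_add q hq d.toNat (-d).toNat (Btr d) (Blo d)
      ⟨‖S‖, hbtrS d⟩ ⟨‖S‖, hbloS d⟩ hXX)
  refine (essNorm_le S Ktot hKc).trans ?_
  rw [hSK]
  refine (norm_sum_le _ _).trans ?_
  have hcard : (Finset.Icc (-(m : ℤ)) (m : ℤ)).card = 2 * m + 1 := by
    rw [Int.card_Icc]
    omega
  calc ∑ d ∈ Finset.Icc (-(m : ℤ)) (m : ℤ),
        ‖diagOp q hq d.toNat (-d).toNat (Btr d) ⟨‖S‖, hbtrS d⟩‖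
      ≤ ∑ d ∈ Finset.Icc (-(m : ℤ)) (m : ℤ), C := by
        refine Finset.sum_le_sum fun d hd => ?_
        refine diagOp_norm_le q hq _ _ _ _ ?_ hC0
        intro k
        by_cases h : N ≤ k
        · simp only [hBtr, if_pos h]; exact hC d hd k h
        · simp only [hBtr, if_neg h, norm_zero]; exact hC0
    _ = (2 * (m : ℝ) + 1) * C := by
        rw [Finset.sum_const, hcard, nsmul_eq_mul]
        push_cast
        ring

lemma essNorm_le_mul (q q' : ℝ≥0∞) [Fact (1 ≤ q)] [Fact (1 ≤ q')] (hq : q ≠ ⊤) (hq' : q' ≠ ⊤)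
    (hq'1 : 1 < q') [∀ i, FiniteDimensional ℂ (E i)]
    (S : lp E q →L[ℂ] lp E q) (S' : lp E q' →L[ℂ] lp E q') (m : ℕ)
    (hpat : ∀ i j : ℕ, (m : ℤ) < |(i : ℤ) - (j : ℤ)| → blockOf q hq S i j = 0)
    (hblocks : ∀ i j : ℕ, blockOf q hq S i j = blockOf q' hq' S' i j) :
    essNorm S ≤ (2 * (m : ℝ) + 1) * essNorm S' := by
  have key : ∀ ε : ℝ, 0 < ε → essNorm S ≤ (2 * (m : ℝ) + 1) * (essNorm S' + ε) := by
    intro ε hε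
    have hev : ∀ᶠ k in Filter.atTop, ∀ d ∈ Finset.Icc (-(m : ℤ)) (m : ℤ),
        ‖blockOf q' hq' S' (k + d.toNat) (k + (-d).toNat)‖ ≤ essNorm S' + ε := by
      rw [Filter.eventually_all_finset]
      intro d _
      exact eventually_block_le q' hq' hq'1 S' d.toNat (-d).toNat hε
    obtain ⟨N, hN⟩ := Filter.eventually_atTop.mp hev
    refine essNorm_le_of_banded q hq S m N _
      (add_nonneg (essNorm_nonneg S') hε.le) hpat ?_
    intro d hd k hk
    rw [hblocks]
    exact hN k hk d hd
  refine le_of_forall_pos_le_add fun ε hε => ?_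
  have hm : (0:ℝ) < 2 * (m : ℝ) + 1 := by positivity
  have h := key (ε / (2 * (m : ℝ) + 1)) (by positivity)
  calc essNorm S ≤ (2 * (m : ℝ) + 1) * (essNorm S' + ε / (2 * (m : ℝ) + 1)) := h
    _ = (2 * (m : ℝ) + 1) * essNorm S' + ε := by field_simp

end MainLemmas


theorem statement_6 (p : ℝ≥0∞) [Fact (1 ≤ p)] (hp1 : 1 < p) (hp2 : p ≠ ⊤)
    (E : ℕ → Type*) [∀ k, NormedAddCommGroup (E k)] [∀ k, InnerProductSpace ℂ (E k)]
    [∀ k, FiniteDimensional ℂ (E k)]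
    (W : ℕ → Set (lp E 2 →L[ℂ] lp E 2))
    (hW : ∀ m, W m = {T | ∀ k j : ℕ, (m : ℤ) < |(k : ℤ) - (j : ℤ)| →
      (lpProj 2 k).comp (T.comp (lpIncl 2 ENNReal.ofNat_ne_top j)) = 0})
    (Ψ : (lp E 2 →L[ℂ] lp E 2) → (lp E p →L[ℂ] lp E p))
    -- `Ψ T` is the operator on `Xₚ` with the same block matrix as `T`
    (hΨ : ∀ T ∈ ⋃ m, W m, ∀ i j : ℕ,
      (lpProj p i).comp ((Ψ T).comp (lpIncl p hp2 j)) =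
        (lpProj 2 i).comp (T.comp (lpIncl 2 ENNReal.ofNat_ne_top j))) :
    ∀ m : ℕ, ∀ T ∈ W m,
      (1 / (2 * (m : ℝ) + 1)) * essNorm T ≤ essNorm (Ψ T) ∧
      essNorm (Ψ T) ≤ (2 * (m : ℝ) + 1) * essNorm T := by
  intro m T hT
  rw [hW] at hT
  have hTmem : T ∈ ⋃ m, W m := Set.mem_iUnion.mpr ⟨m, by rw [hW]; exact hT⟩
  have hblocks : ∀ i j : ℕ,
      blockOf 2 ENNReal.ofNat_ne_top T i j = blockOf p hp2 (Ψ T) i j :=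
    fun i j => (hΨ T hTmem i j).symm
  have hpat2 : ∀ i j : ℕ, (m : ℤ) < |(i : ℤ) - (j : ℤ)| →
      blockOf 2 ENNReal.ofNat_ne_top T i j = 0 := fun i j h => hT i j h
  have hpatp : ∀ i j : ℕ, (m : ℤ) < |(i : ℤ) - (j : ℤ)| →
      blockOf p hp2 (Ψ T) i j = 0 := fun i j h => (hblocks i j) ▸ hpat2 i j h
  have h21 : (1 : ℝ≥0∞) < 2 := ENNReal.one_lt_two
  have hd2 := essNorm_le_mul 2 p ENNReal.ofNat_ne_top hp2 hp1 T (Ψ T) m hpat2 hblocks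
  have hd1 := essNorm_le_mul p 2 hp2 ENNReal.ofNat_ne_top h21 (Ψ T) T m hpatp
    (fun i j => (hblocks i j).symm)
  constructor
  · have hm : (0:ℝ) < 2 * (m : ℝ) + 1 := by positivity
    calc (1 / (2 * (m : ℝ) + 1)) * essNorm T
        ≤ (1 / (2 * (m : ℝ) + 1)) * ((2 * (m : ℝ) + 1) * essNorm (Ψ T)) :=
          mul_le_mul_of_nonneg_left hd2 (by positivity)
      _ = essNorm (Ψ T) := by field_simp
  · exact hd1


end Paper
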